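/- If g is an element of the first Grigorchuk group 𝒢 and t : C(1) → C(n) is a binary tree, then t ∘ g = p_α ∘ (g₁ ⊕ ⋯ ⊕ g_n) ∘ t' for some binary tree t' : C(1) → C(n), some elements g₁, …, g_n ∈ 𝒢, and some permutation α ∈ S_n. -/

import Mathlib

/-! Basic setup: the Cantor set `Δ = ℕ → Bool` and `C n = Fin n × Δ`,
the disjoint union of `n` copies of the Cantor set. -/

abbrev Δ : Type := ℕ → Bool
abbrev C (n : ℕ) : Type := Fin n × Δ

/-- A bijection between discrete spaces, as a homeomorphism. -/
def discHomeo {X Y : Type*} [TopologicalSpace X] [TopologicalSpace Y]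
    [DiscreteTopology X] [DiscreteTopology Y] (e : X ≃ Y) : X ≃ₜ Y :=
  ⟨e, continuous_of_discreteTopology, continuous_of_discreteTopology⟩

/-- The permutation homeomorphism `p_α : C n ≃ₜ C n`, permuting the copies
of the Cantor set according to `α`. -/
def permC {n : ℕ} (α : Equiv.Perm (Fin n)) : C n ≃ₜ C n :=
  (discHomeo α).prodCongr (Homeomorph.refl Δ)

/-- Cast between `C m` and `C n` when `m = n`. -/
def castC {m n : ℕ} (h : m = n) : C m ≃ₜ C n :=
  (discHomeo (finCongr h)).prodCongr (Homeomorph.refl Δ)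

/-- `C (m + n)` is the disjoint union of `C m` and `C n` (first `m` copies,
then the remaining `n` copies). -/
def toSum (m n : ℕ) : C (m + n) ≃ₜ (C m) ⊕ (C n) :=
  ((discHomeo finSumFinEquiv.symm).prodCongr (Homeomorph.refl Δ)).trans
    (Homeomorph.sumProdDistrib)

/-- The direct sum `f ⊕ g` of homeomorphisms, acting as `f` on the first `m`
copies (sent to the first `m'` copies) and as `g` on the last `n` copies. -/
def dsum {m m' n n' : ℕ} (f : C m ≃ₜ C m') (g : C n ≃ₜ C n') :
    C (m + n) ≃ₜ C (m' + n') :=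
  ((toSum m n).trans (f.sumCongr g)).trans (toSum m' n').symm

/-- The split homeomorphism `x : C 1 ≃ₜ C 2`: a sequence starting with letter
`i` is sent to the `(i+1)`-st copy of the Cantor set, deleting the first letter. -/
def split : C 1 ≃ₜ C 2 where
  toFun p := (finTwoEquiv.symm (p.2 0), fun k => p.2 (k + 1))
  invFun p := (0, fun k => Nat.casesOn k (finTwoEquiv p.1) (fun j => p.2 j))
  left_inv := by
    rintro ⟨i, w⟩
    refine Prod.ext (Subsingleton.elim _ _) ?_
    funext k
    cases k <;> simp
  right_inv := by
    rintro ⟨i, w⟩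
    refine Prod.ext ?_ rfl
    simp
  continuous_toFun := by
    refine Continuous.prodMk ?_ ?_
    · exact Continuous.comp continuous_of_discreteTopology
        ((continuous_apply 0).comp continuous_snd)
    · exact continuous_pi fun k => (continuous_apply (k + 1)).comp continuous_snd
  continuous_invFun := by
    refine Continuous.prodMk continuous_const ?_
    refine continuous_pi fun k => ?_
    cases k with
    | zero => exact Continuous.comp continuous_of_discreteTopology continuous_fst
    | succ j => exact (continuous_apply j).comp continuous_snd

/-- The split homeomorphism `x_i^{(n)} = id_{i-1} ⊕ x ⊕ id_{n-i} : C n ≃ₜ C (n+1)`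
(with `i` zero-indexed, so `i : Fin n` splits the `(i+1)`-st copy). -/
def splitAt {n : ℕ} (i : Fin n) : C n ≃ₜ C (n + 1) :=
  ((castC (show n = (i : ℕ) + 1 + (n - 1 - i) by have := i.isLt; omega)).trans
    (dsum (dsum (Homeomorph.refl (C i)) split) (Homeomorph.refl (C (n - 1 - i))))).trans
    (castC (show (i : ℕ) + 2 + (n - 1 - i) = n + 1 by have := i.isLt; omega))

/-- `IsForest f` says that `f : C m ≃ₜ C n` is a binary forest, i.e. a
(possibly empty) composition of split homeomorphisms.  A binary tree is a
binary forest with domain `C 1`. -/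
inductive IsForest : ∀ {m n : ℕ}, (C m ≃ₜ C n) → Prop where
  | refl (m : ℕ) : IsForest (Homeomorph.refl (C m))
  | step {m n : ℕ} {f : C m ≃ₜ C n} (i : Fin n) (hf : IsForest f) :
      IsForest (f.trans (splitAt i))

/-! The Grigorchuk generators `σ, b, c, d`, defined via the Grigorchuk automaton:
on binary sequences, `σ` flips the first letter, and `b(0w)=0σ(w)`, `b(1w)=1c(w)`,
`c(0w)=0σ(w)`, `c(1w)=1d(w)`, `d(0w)=0w`, `d(1w)=1b(w)`. -/

/-- States of the Grigorchuk automaton: the identity, `σ`, `b`, `c`, `d`. -/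
inductive GS : Type | e | s | b | c | d
deriving DecidableEq

instance : Fintype GS :=
  ⟨{.e, .s, .b, .c, .d}, by intro x; cases x <;> decide⟩

instance : TopologicalSpace GS := ⊥
instance : DiscreteTopology GS := ⟨rfl⟩

/-- Output function of the Grigorchuk automaton. -/
def GS.out : GS → Bool → Bool
  | .s, i => !i
  | _,  i => i

/-- Transition function of the Grigorchuk automaton. -/
def GS.step : GS → Bool → GS
  | .e, _ => .e
  | .s, _ => .e
  | .b, false => .s
  | .b, true  => .c
  | .c, false => .s
  | .c, true  => .d
  | .d, false => .e
  | .d, true  => .b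

/-- The state of the automaton started in state `g` after reading `w 0, …, w (n-1)`. -/
def GS.stArr (g : GS) (w : Δ) : ℕ → GS
  | 0 => g
  | n + 1 => (GS.stArr g w n).step (w n)

/-- The action of the automaton state `g` on infinite binary sequences. -/
def GS.act (g : GS) (w : Δ) : Δ := fun n => (GS.stArr g w n).out (w n)

lemma GS.out_out : ∀ (g : GS) (i : Bool), g.out (g.out i) = i := by decide

lemma GS.step_out : ∀ (g : GS) (i : Bool), g.step (g.out i) = g.step i := by decide

lemma GS.stArr_act (g : GS) (w : Δ) : ∀ n, GS.stArr g (GS.act g w) n = GS.stArr g w n := by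
  intro n
  induction n with
  | zero => rfl
  | succ n ih => rw [GS.stArr, GS.stArr, ih, GS.act, GS.step_out]

lemma GS.act_act (g : GS) (w : Δ) : GS.act g (GS.act g w) = w := by
  funext n
  rw [GS.act, GS.stArr_act, GS.act, GS.out_out]

lemma GS.continuous_stArr (g : GS) (n : ℕ) : Continuous (fun w : Δ => GS.stArr g w n) := by
  induction n with
  | zero => exact continuous_const
  | succ n ih =>
      exact Continuous.comp (f := fun w : Δ => ((GS.stArr g w n), w n))
        (g := fun p : GS × Bool => p.1.step p.2)
        continuous_of_discreteTopology (ih.prodMk (continuous_apply n))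

lemma GS.continuous_act (g : GS) : Continuous (GS.act g) := by
  refine continuous_pi fun n => ?_
  exact Continuous.comp (f := fun w : Δ => ((GS.stArr g w n), w n))
    (g := fun p : GS × Bool => p.1.out p.2)
    continuous_of_discreteTopology ((GS.continuous_stArr g n).prodMk (continuous_apply n))

/-- The homeomorphism of the Cantor set determined by an automaton state. -/
def GS.homeo (g : GS) : Δ ≃ₜ Δ where
  toFun := GS.act g
  invFun := GS.act g
  left_inv := GS.act_act g
  right_inv := GS.act_act g
  continuous_toFun := GS.continuous_act g
  continuous_invFun := GS.continuous_act g

/-- Lift a homeomorphism of the Cantor set to `C 1`. -/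
def liftC1 (h : Δ ≃ₜ Δ) : C 1 ≃ₜ C 1 := (Homeomorph.refl (Fin 1)).prodCongr h

/-- The Grigorchuk generator `σ` (flips the first letter). -/
def gσ : C 1 ≃ₜ C 1 := liftC1 (GS.homeo .s)
/-- The Grigorchuk generator `b`. -/
def gb : C 1 ≃ₜ C 1 := liftC1 (GS.homeo .b)
/-- The Grigorchuk generator `c`. -/
def gc : C 1 ≃ₜ C 1 := liftC1 (GS.homeo .c)
/-- The Grigorchuk generator `d`. -/
def gd : C 1 ≃ₜ C 1 := liftC1 (GS.homeo .d)

/-- The group of self-homeomorphisms of `C n`, with `(f * g) x = f (g x)`. -/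
instance homeoGroup (n : ℕ) : Group (C n ≃ₜ C n) where
  mul f g := g.trans f
  one := Homeomorph.refl _
  inv := Homeomorph.symm
  mul_assoc a b c := rfl
  one_mul a := rfl
  mul_one a := rfl
  inv_mul_cancel a := Homeomorph.self_trans_symm a

/-- The first Grigorchuk group `𝒢 = ⟨σ, b, c, d⟩`. -/
def Grig : Subgroup (C 1 ≃ₜ C 1) :=
  Subgroup.closure {gσ, gb, gc, gd}

/-- The set `K = {1, b, c, d}` of homeomorphisms of `C 1`. -/
def Kset : Set (C 1 ≃ₜ C 1) := {Homeomorph.refl (C 1), gb, gc, gd}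

/-- The `n`-fold direct sum `k₁ ⊕ ⋯ ⊕ k_n` of homeomorphisms of `C 1`. -/
def dsumFam : {n : ℕ} → (Fin n → (C 1 ≃ₜ C 1)) → (C n ≃ₜ C n)
  | 0, _ => Homeomorph.refl _
  | n + 1, k => dsum (dsumFam (fun i : Fin n => k i.castSucc)) (k (Fin.last n))

/-- The direct sum `h₁ ⊕ ⋯ ⊕ h_n` of a family of homeomorphisms
`h i : C 1 ≃ₜ C (m i)`. -/
def dsumFamH : {n : ℕ} → {m : Fin n → ℕ} → (∀ i, C 1 ≃ₜ C (m i)) →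
    (C n ≃ₜ C (∑ i, m i))
  | 0, _, _ => castC (by simp)
  | n + 1, m, h =>
      (dsum (dsumFamH (fun i : Fin n => h i.castSucc)) (h (Fin.last n))).trans
        (castC (Fin.sum_univ_castSucc m).symm)

/-- The group `K_n = {p_α ∘ (k₁ ⊕ ⋯ ⊕ k_n) : α ∈ S_n, kᵢ ∈ K}`. -/
def Kn (n : ℕ) : Set (C n ≃ₜ C n) :=
  {h | ∃ (α : Equiv.Perm (Fin n)) (k : Fin n → (C 1 ≃ₜ C 1)),
    (∀ i, k i ∈ Kset) ∧ h = (dsumFam k).trans (permC α)}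

/-- `σ_j : C m ≃ₜ C m`, acting as `σ` on the `(j+1)`-st copy (zero-indexed `j`)
of the Cantor set and as the identity elsewhere. -/
def sigmaAt {m : ℕ} (j : Fin m) : C m ≃ₜ C m :=
  dsumFam (fun i => if i = j then gσ else Homeomorph.refl (C 1))

/-- Membership in the groupoid `𝔙` generated by all split homeomorphisms and
all permutation homeomorphisms. -/
inductive InV : ∀ {m n : ℕ}, (C m ≃ₜ C n) → Prop where
  | split {n : ℕ} (i : Fin n) : InV (splitAt i)
  | perm {n : ℕ} (α : Equiv.Perm (Fin n)) : InV (permC α)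
  | comp {m n p : ℕ} {f : C m ≃ₜ C n} {g : C n ≃ₜ C p} :
      InV f → InV g → InV (f.trans g)
  | inv {m n : ℕ} {f : C m ≃ₜ C n} : InV f → InV f.symm

/-- Membership in Röver's groupoid `𝔙𝒢`, generated by `𝔙` together with the
elements of the Grigorchuk group `𝒢`. -/
inductive InVG : ∀ {m n : ℕ}, (C m ≃ₜ C n) → Prop where
  | split {n : ℕ} (i : Fin n) : InVG (splitAt i)
  | perm {n : ℕ} (α : Equiv.Perm (Fin n)) : InVG (permC α)
  | grig {g : C 1 ≃ₜ C 1} : g ∈ Grig → InVG g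
  | comp {m n p : ℕ} {f : C m ≃ₜ C n} {g : C n ≃ₜ C p} :
      InVG f → InVG g → InVG (f.trans g)
  | inv {m n : ℕ} {f : C m ≃ₜ C n} : InVG f → InVG f.symm

/-- The coset `[f] = K_n f = {k ∘ f : k ∈ K_n}` of `f : C 1 ≃ₜ C n`. -/
def coset {n : ℕ} (f : C 1 ≃ₜ C n) : Set (C 1 ≃ₜ C n) :=
  {h | ∃ k ∈ Kn n, h = f.trans k}

/-- The ambient type for vertices of the poset `𝒫`: a rank `n` together with
a set of homeomorphisms `C 1 ≃ₜ C n`. -/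
def PP : Type := Σ n : ℕ, Set (C 1 ≃ₜ C n)

/-- A member of `PP` is a vertex of `𝒫` if it is the coset `[f] = K_n f` of
some `f : C 1 ≃ₜ C n` in Röver's groupoid. -/
def IsVert (v : PP) : Prop :=
  ∃ f : C 1 ≃ₜ C v.1, InVG f ∧ v.2 = coset f

/-- `w` is a splitting of `v` if `v = [f]` and `w = [x_i ∘ f]` for some
representative `f` and some index `i`. -/
def SplittingOf (v w : PP) : Prop :=
  ∃ (n : ℕ) (f : C 1 ≃ₜ C n) (i : Fin n), InVG f ∧
    v = ⟨n, coset f⟩ ∧ w = ⟨n + 1, coset (f.trans (splitAt i))⟩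

/-- `w` is an expansion of `v` (written `v ≤ w`): `w` is obtained from `v` by
a finite (possibly empty) sequence of splittings. -/
def Expansion : PP → PP → Prop := Relation.ReflTransGen SplittingOf

/-- The four possible elementary pieces `1, x, σ₁ ∘ x, x₁ ∘ x` (with their
ranks), used to define elementary expansions. -/
def elemSet : Set (Σ m : ℕ, (C 1 ≃ₜ C m)) :=
  {⟨1, Homeomorph.refl (C 1)⟩, ⟨2, split⟩,
   ⟨2, split.trans (sigmaAt (0 : Fin 2))⟩,
   ⟨3, split.trans (splitAt (0 : Fin 2))⟩}

/-- `w` is an elementary expansion of `v`: `v = [f]` and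
`w = [(u₁ ⊕ ⋯ ⊕ u_n) ∘ f]` where each `uᵢ ∈ {1, x, σ₁∘x, x₁∘x}`. -/
def ElemExp (v w : PP) : Prop :=
  ∃ (n : ℕ) (f : C 1 ≃ₜ C n) (m : Fin n → ℕ) (h : ∀ i, C 1 ≃ₜ C (m i)),
    InVG f ∧ (∀ i, (⟨m i, h i⟩ : Σ m : ℕ, (C 1 ≃ₜ C m)) ∈ elemSet) ∧
    v = ⟨n, coset f⟩ ∧ w = ⟨∑ i, m i, coset (f.trans (dsumFamH h))⟩

-- basic apply lemmas test
lemma permC_apply {n : ℕ} (α : Equiv.Perm (Fin n)) (s : Fin n) (w : Δ) :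
    permC α (s, w) = (α s, w) := rfl

lemma castC_apply {m n : ℕ} (h : m = n) (s : Fin m) (w : Δ) :
    castC h (s, w) = (⟨s.val, h ▸ s.isLt⟩, w) := rfl

lemma dsum_apply_left {m m' n n' : ℕ} (f : C m ≃ₜ C m') (g : C n ≃ₜ C n')
    (s : Fin m) (w : Δ) :
    dsum f g (Fin.castAdd n s, w) = (Fin.castAdd n' (f (s, w)).1, (f (s, w)).2) := by
  simp [dsum, toSum, discHomeo, Homeomorph.trans_apply, Homeomorph.sumCongr, Equiv.sumProdDistrib, Equiv.prodComm, Equiv.prodSumDistrib, Prod.map, finSumFinEquiv_apply_left, finSumFinEquiv_apply_right]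

lemma dsum_apply_right {m m' n n' : ℕ} (f : C m ≃ₜ C m') (g : C n ≃ₜ C n')
    (s : Fin n) (w : Δ) :
    dsum f g (Fin.natAdd m s, w) = (Fin.natAdd m' (g (s, w)).1, (g (s, w)).2) := by
  simp [dsum, toSum, discHomeo, Homeomorph.trans_apply, Homeomorph.sumCongr, Equiv.sumProdDistrib, Equiv.prodComm, Equiv.prodSumDistrib, Prod.map, finSumFinEquiv_apply_left, finSumFinEquiv_apply_right]
/-- Prepend a letter to an infinite word. -/
def consB (b : Bool) (w : Δ) : Δ := fun n => Nat.casesOn n b (fun k => w k)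

@[simp] lemma consB_zero (b : Bool) (w : Δ) : consB b w 0 = b := rfl
@[simp] lemma consB_succ (b : Bool) (w : Δ) (n : ℕ) : consB b w (n + 1) = w n := rfl
@[simp] lemma tail_consB (b : Bool) (w : Δ) : (fun k => consB b w (k + 1)) = w := rfl

lemma split_apply (s : Fin 1) (w : Δ) :
    split (s, w) = (⟨cond (w 0) 1 0, by rcases w 0 <;> simp⟩, fun k => w (k + 1)) := by
  refine Prod.ext (Fin.ext ?_) rfl
  show (finTwoEquiv.symm (w 0)).val = cond (w 0) 1 0
  rcases w 0 <;> rfl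

lemma splitAt_apply {n : ℕ} (i : Fin n) (s : Fin n) (w : Δ) :
    splitAt i (s, w) =
      if h : s.val < i.val then (⟨s.val, by omega⟩, w)
      else if h2 : s.val = i.val then
        (⟨i.val + cond (w 0) 1 0, by rcases w 0 <;> simp <;> omega⟩, fun k => w (k + 1))
      else (⟨s.val + 1, by omega⟩, w) := by
  have hi := i.isLt
  have hs := s.isLt
  rcases lt_trichotomy s.val i.val with h | h | h
  · rw [dif_pos h]
    unfold splitAt
    simp only [Homeomorph.trans_apply]
    rw [castC_apply, castC_apply]
    have : (⟨s.val, by omega⟩ : Fin ((i:ℕ)+1+(n-1-i))) =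
        Fin.castAdd (n-1-(i:ℕ)) (Fin.castAdd 1 ⟨s.val, h⟩) := by
      apply Fin.ext; simp
    rw [this, dsum_apply_left, dsum_apply_left]
    simp [castC_apply]
  · rw [dif_neg (by omega), dif_pos h]
    unfold splitAt
    simp only [Homeomorph.trans_apply]
    rw [castC_apply, castC_apply]
    have : (⟨s.val, by omega⟩ : Fin ((i:ℕ)+1+(n-1-i))) =
        Fin.castAdd (n-1-(i:ℕ)) (Fin.natAdd i (0 : Fin 1)) := by
      apply Fin.ext; simp; omega
    rw [this, dsum_apply_left, dsum_apply_right, split_apply]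
    simp [castC_apply]
  · rw [dif_neg (by omega), dif_neg (by omega)]
    unfold splitAt
    simp only [Homeomorph.trans_apply]
    rw [castC_apply, castC_apply]
    have : (⟨s.val, by omega⟩ : Fin ((i:ℕ)+1+(n-1-i))) =
        Fin.natAdd ((i:ℕ)+1) ⟨s.val-(i+1), by omega⟩ := by
      apply Fin.ext; simp; omega
    rw [this, dsum_apply_right]
    simp [castC_apply]
    omega
lemma splitAt_symm_apply {n : ℕ} (i : Fin n) (s : Fin (n + 1)) (w : Δ) :
    (splitAt i).symm (s, w) =
      if h : s.val < i.val then (⟨s.val, by have := i.isLt; omega⟩, w)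
      else if h2 : s.val ≤ i.val + 1 then (i, consB (decide (s.val = i.val + 1)) w)
      else (⟨s.val - 1, by have := s.isLt; omega⟩, w) := by
  have hi := i.isLt
  have hs := s.isLt
  rcases lt_trichotomy s.val i.val with h | h | h
  · rw [dif_pos h]
    have key : splitAt i (⟨s.val, by omega⟩, w) = (s, w) := by
      rw [splitAt_apply, dif_pos (by simpa using h)]
    rw [← key, Homeomorph.symm_apply_apply]
  · rw [dif_neg (by omega), dif_pos (by omega)]
    have hd : decide (s.val = i.val + 1) = false := by simp; omega
    rw [hd]
    have key : splitAt i (i, consB false w) = (s, w) := by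
      rw [splitAt_apply, dif_neg (by omega), dif_pos rfl]
      refine Prod.ext (Fin.ext ?_) ?_
      · simp; omega
      · funext k; simp
    rw [← key, Homeomorph.symm_apply_apply]
  · rw [dif_neg (by omega)]
    by_cases h2 : s.val ≤ i.val + 1
    · rw [dif_pos h2]
      have hse : s.val = i.val + 1 := by omega
      have hd : decide (s.val = i.val + 1) = true := by simp [hse]
      rw [hd]
      have key : splitAt i (i, consB true w) = (s, w) := by
        rw [splitAt_apply, dif_neg (by omega), dif_pos rfl]
        refine Prod.ext (Fin.ext ?_) ?_
        · simp; omega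
        · funext k; simp
      rw [← key, Homeomorph.symm_apply_apply]
    · rw [dif_neg h2]
      have key : splitAt i (⟨s.val - 1, by omega⟩, w) = (s, w) := by
        rw [splitAt_apply, dif_neg (by simp; omega), dif_neg (by simp; omega)]
        refine Prod.ext (Fin.ext ?_) rfl
        simp; omega
      rw [← key, Homeomorph.symm_apply_apply]

lemma dsumFam_apply {n : ℕ} (k : Fin n → (C 1 ≃ₜ C 1)) (s : Fin n) (w : Δ) :
    dsumFam k (s, w) = (s, ((k s) (0, w)).2) := by
  induction n with
  | zero => exact s.elim0
  | succ n ih =>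
      by_cases h : s.val < n
      · have hs : s = Fin.castAdd 1 ⟨s.val, h⟩ := by apply Fin.ext; simp
        rw [hs]
        show dsum (dsumFam fun i : Fin n => k i.castSucc) (k (Fin.last n)) _ = _
        rw [dsum_apply_left, ih]
        refine Prod.ext (Fin.ext (by simp)) ?_
        congr 1
      · have hs : s = Fin.natAdd n (0 : Fin 1) := by apply Fin.ext; simp; omega
        have hlast : Fin.last n = s := by apply Fin.ext; rw [hs]; simp [Fin.last]
        conv_lhs => rw [hs]
        show dsum (dsumFam fun i : Fin n => k i.castSucc) (k (Fin.last n)) _ = _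
        rw [dsum_apply_right, hlast]
        refine Prod.ext (Fin.ext ?_) rfl
        have h1 : ((k s) ((0 : Fin 1), w)).1 = 0 := Fin.eq_zero _
        rw [hs]
        simp [h1]
lemma GS.stArr_consB (g : GS) (b : Bool) (w : Δ) :
    ∀ n, GS.stArr g (consB b w) (n + 1) = GS.stArr (g.step b) w n := by
  intro n
  induction n with
  | zero => rfl
  | succ n ih => rw [GS.stArr, ih, consB_succ]; rfl

lemma GS.act_consB (g : GS) (b : Bool) (w : Δ) :
    GS.act g (consB b w) = consB (g.out b) (GS.act (g.step b) w) := by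
  funext n
  cases n with
  | zero => rfl
  | succ n => rw [GS.act, GS.stArr_consB, consB_succ, consB_succ]; rfl

lemma GS.act_e (w : Δ) : GS.act .e w = w := by
  funext n
  have : GS.stArr .e w n = .e := by
    induction n with
    | zero => rfl
    | succ n ih => rw [GS.stArr, ih]; rfl
  rw [GS.act, this]; rfl

lemma liftC1_apply (h : Δ ≃ₜ Δ) (s : Fin 1) (w : Δ) : liftC1 h (s, w) = (s, h w) := rfl

lemma liftC1_e : liftC1 (GS.homeo .e) = Homeomorph.refl (C 1) := by
  apply Homeomorph.toEquiv_injective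
  apply Equiv.ext
  rintro ⟨s, w⟩
  show (s, GS.act .e w) = (s, w)
  rw [GS.act_e]

lemma gst_mem (st : GS) : liftC1 (GS.homeo st) ∈ Grig := by
  cases st with
  | e => rw [liftC1_e]; exact Subgroup.one_mem _
  | s => exact Subgroup.subset_closure (by simp [Kset]; left; rfl)
  | b => exact Subgroup.subset_closure (by right; left; rfl)
  | c => exact Subgroup.subset_closure (by right; right; left; rfl)
  | d => exact Subgroup.subset_closure (by right; right; right; rfl)

/-- First component of any self-homeomorphism value of `C 1` is `0`. -/
lemma fstC1 (g : C 1 ≃ₜ C 1) (p : C 1) : g p = (0, (g p).2) :=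
  Prod.ext (Fin.eq_zero _) rfl

lemma mul_apply' (a b : C 1 ≃ₜ C 1) (p : C 1) : (a * b) p = a (b p) := rfl

/-- Wreath recursion property for an element of `Homeo(C 1)`. -/
def WreathP (g : C 1 ≃ₜ C 1) : Prop :=
  ∃ (ε : Bool) (g0 g1 : C 1 ≃ₜ C 1), g0 ∈ Grig ∧ g1 ∈ Grig ∧
    ∀ (b : Bool) (w : Δ),
      g (0, consB b w) = (0, consB (xor b ε) (((bif b then g1 else g0) (0, w)).2))

lemma wreath_gen (st : GS) : WreathP (liftC1 (GS.homeo st)) := by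
  refine ⟨decide (st = .s), liftC1 (GS.homeo (st.step false)), liftC1 (GS.homeo (st.step true)),
    gst_mem _, gst_mem _, ?_⟩
  intro b w
  rw [liftC1_apply]
  have : GS.homeo st (consB b w) = GS.act st (consB b w) := rfl
  rw [this, GS.act_consB]
  have hout : st.out b = xor b (decide (st = .s)) := by cases st <;> cases b <;> rfl
  rw [hout]
  congr 1
  cases b <;> rfl

lemma wreath_one : WreathP 1 := by
  refine ⟨false, 1, 1, Subgroup.one_mem _, Subgroup.one_mem _, ?_⟩
  intro b w
  cases b <;> rfl

lemma wreath_mul {f g : C 1 ≃ₜ C 1} (hf : WreathP f) (hg : WreathP g) : WreathP (f * g) := by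
  obtain ⟨εf, f0, f1, hf0, hf1, hfw⟩ := hf
  obtain ⟨εg, g0, g1, hg0, hg1, hgw⟩ := hg
  refine ⟨xor εg εf,
    (bif εg then f1 else f0) * g0, (bif !εg then f1 else f0) * g1,
    mul_mem (by cases εg <;> assumption) hg0, mul_mem (by cases !εg <;> assumption) hg1, ?_⟩
  intro b w
  show f (g (0, consB b w)) = _
  rw [hgw]
  have h2 : (0, (((bif b then g1 else g0)) ((0 : Fin 1), w)).2) = (bif b then g1 else g0) (0, w) :=
    (fstC1 _ _).symm
  rw [hfw]
  rw [show ((bif xor b εg then f1 else f0) ((0:Fin 1), (((bif b then g1 else g0)) ((0:Fin 1), w)).2))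
      = (bif xor b εg then f1 else f0) ((bif b then g1 else g0) ((0:Fin 1), w)) by rw [← h2]]
  cases b <;> cases εg <;> simp [mul_apply']
lemma wreath_inv {g : C 1 ≃ₜ C 1} (hg : WreathP g) : WreathP g⁻¹ := by
  obtain ⟨ε, g0, g1, hg0, hg1, hw⟩ := hg
  refine ⟨ε, (bif ε then g1 else g0)⁻¹, (bif !ε then g1 else g0)⁻¹,
    inv_mem (by cases ε <;> assumption), inv_mem (by cases !ε <;> assumption), ?_⟩
  intro b w
  set G : C 1 ≃ₜ C 1 := bif xor b ε then g1 else g0 with hGdef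
  have hG : (bif b then (bif !ε then g1 else g0)⁻¹ else (bif ε then g1 else g0)⁻¹) = G⁻¹ := by
    rw [hGdef]; cases b <;> cases ε <;> rfl
  rw [hG]
  have h2 : ((0 : Fin 1), ((G⁻¹ : C 1 ≃ₜ C 1) ((0 : Fin 1), w)).2) = G.symm (0, w) :=
    (fstC1 _ _).symm
  have key : g (0, consB (xor b ε) (((G⁻¹ : C 1 ≃ₜ C 1)) ((0 : Fin 1), w)).2)
      = (0, consB b w) := by
    rw [hw]
    have hxx : xor (xor b ε) ε = b := by cases b <;> cases ε <;> rfl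
    rw [hxx, h2]
    show (0, consB b ((G (G.symm ((0 : Fin 1), w))).2)) = _
    rw [Homeomorph.apply_symm_apply]
  show g.symm _ = _
  rw [← key, Homeomorph.symm_apply_apply]

lemma wreath (g : C 1 ≃ₜ C 1) (hg : g ∈ Grig) : WreathP g := by
  refine Subgroup.closure_induction (p := fun x _ => WreathP x) ?_ wreath_one
    (fun x y _ _ hx hy => wreath_mul hx hy) (fun x _ hx => wreath_inv hx) hg
  intro x hx
  rcases hx with h | h | h | h
  · rw [h]; exact wreath_gen .s
  · rw [h]; exact wreath_gen .b
  · rw [h]; exact wreath_gen .c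
  · rw [show x = gd from h]; exact wreath_gen .d
/-- `F` acts as a permutation of the copies composed with Grigorchuk elements
on each copy, described pointwise. -/
def Good' {n : ℕ} (F : C n ≃ₜ C n) : Prop :=
  ∃ (k : Fin n → (C 1 ≃ₜ C 1)) (φ : Fin n → Fin n),
    (∀ s, k s ∈ Grig) ∧ ∀ (s : Fin n) (w : Δ), F (s, w) = (φ s, ((k s) (0, w)).2)

lemma good'_bij {n : ℕ} (F : C n ≃ₜ C n) (k : Fin n → (C 1 ≃ₜ C 1)) (φ : Fin n → Fin n)
    (hform : ∀ s w, F (s, w) = (φ s, ((k s) (0, w)).2)) : Function.Bijective φ := by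
  have hinj : Function.Injective φ := by
    intro s s' h
    set w0 : Δ := fun _ => false with hw0
    set u := ((k s) (0, w0)).2 with hu
    set w' := ((k s').symm (0, u)).2 with hw'
    have h0 : ((k s').symm ((0 : Fin 1), u)) = (0, w') := Prod.ext (Fin.eq_zero _) rfl
    have h2 : (k s') ((0 : Fin 1), w') = (0, u) := by rw [← h0, Homeomorph.apply_symm_apply]
    have h3 : F (s, w0) = F (s', w') := by
      rw [hform, hform, h2, h, ← hu]
    have h4 := F.toEquiv.injective h3
    exact congrArg Prod.fst h4
  exact Finite.injective_iff_bijective.mp hinj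

lemma good'_perm {n : ℕ} {F : C n ≃ₜ C n} (h : Good' F) :
    ∃ (gs : Fin n → (C 1 ≃ₜ C 1)) (α : Equiv.Perm (Fin n)),
      (∀ s, gs s ∈ Grig) ∧ F = (dsumFam gs).trans (permC α) := by
  obtain ⟨k, φ, hk, hform⟩ := h
  have hbij := good'_bij F k φ hform
  refine ⟨k, Equiv.ofBijective φ hbij, hk, ?_⟩
  apply Homeomorph.toEquiv_injective; apply Equiv.ext
  rintro ⟨s, w⟩
  show F (s, w) = permC (Equiv.ofBijective φ hbij) (dsumFam k (s, w))
  rw [dsumFam_apply, permC_apply, hform]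
  rfl

/-- Shift an index of `Fin n` into `Fin (n+1)` past a split at position `i`. -/
def shiftIdx {n : ℕ} (i : Fin n) (t : Fin n) : Fin (n + 1) :=
  if t.val < i.val then ⟨t.val, Nat.lt_succ_of_lt t.isLt⟩
  else ⟨t.val + 1, Nat.succ_lt_succ t.isLt⟩

lemma good'_step {n : ℕ} {F : C n ≃ₜ C n} (hF : Good' F) (i : Fin n) :
    ∃ (j : Fin n) (F' : C (n + 1) ≃ₜ C (n + 1)), Good' F' ∧
      F.trans (splitAt i) = (splitAt j).trans F' := by
  obtain ⟨k, φ, hk, hform⟩ := hF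
  have hbij : Function.Bijective φ := good'_bij F k φ hform
  obtain ⟨j, hj⟩ := hbij.2 i
  subst hj
  obtain ⟨ε, g0, g1, hg0, hg1, hw⟩ := wreath (k j) (hk j)
  have hjn := j.isLt
  have hin := (φ j).isLt
  refine ⟨j, (splitAt j).symm.trans (F.trans (splitAt (φ j))), ?_, ?_⟩
  swap
  · apply Homeomorph.toEquiv_injective; apply Equiv.ext; intro p
    show splitAt (φ j) (F p) = splitAt (φ j) (F ((splitAt j).symm (splitAt j p)))
    rw [Homeomorph.symm_apply_apply]
  refine ⟨fun s => if h : s.val < j.val then k ⟨s.val, by omega⟩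
      else if s.val = j.val then g0 else if s.val = j.val + 1 then g1
      else k ⟨s.val - 1, by have := s.isLt; omega⟩,
    fun s => if h : s.val < j.val then shiftIdx (φ j) (φ ⟨s.val, by omega⟩)
      else if s.val = j.val then ⟨(φ j).val + cond ε 1 0, by rcases ε <;> simp <;> omega⟩
      else if s.val = j.val + 1 then ⟨(φ j).val + cond ε 0 1, by rcases ε <;> simp <;> omega⟩
      else shiftIdx (φ j) (φ ⟨s.val - 1, by have := s.isLt; omega⟩),
    ?_, ?_⟩
  · intro s
    dsimp only
    split_ifs with h1 h2 h3
    exacts [hk _, hg0, hg1, hk _]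
  intro s w
  have hs := s.isLt
  show splitAt (φ j) (F ((splitAt j).symm (s, w))) = _
  rw [splitAt_symm_apply]
  have hne : ∀ (v : ℕ) (hv : v < n), v ≠ j.val → φ ⟨v, hv⟩ ≠ φ j := by
    intro v hv hvj hcon
    exact hvj (congrArg Fin.val (hbij.1 hcon))
  by_cases h1 : s.val < j.val
  · rw [dif_pos h1, hform, splitAt_apply]
    have hni : φ ⟨s.val, by omega⟩ ≠ φ j := hne _ _ (by omega)
    simp only [dif_pos h1]
    by_cases h2 : (φ (⟨s.val, by omega⟩ : Fin n)).val < (φ j).val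
    · rw [dif_pos h2]
      refine Prod.ext (Fin.ext ?_) rfl
      simp [shiftIdx, h2]
    · have h2' : ¬ (φ (⟨s.val, by omega⟩ : Fin n)).val = (φ j).val :=
        fun hc => hni (Fin.ext hc)
      rw [dif_neg h2, dif_neg h2']
      refine Prod.ext (Fin.ext ?_) rfl
      simp [shiftIdx, h2]
  · by_cases h2 : s.val ≤ j.val + 1
    · by_cases h3 : s.val = j.val
      · rw [dif_neg (by omega), dif_pos (by omega)]
        have hd : decide (s.val = j.val + 1) = false := by simp; omega
        rw [hd, hform, hw, splitAt_apply, dif_neg (by omega), dif_pos rfl]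
        simp only [dif_neg h1, if_pos h3]
        refine Prod.ext (Fin.ext ?_) ?_
        · simp only [Bool.false_xor, consB_zero]
        · simp only [Bool.false_xor]
          funext a; simp
      · have h3' : s.val = j.val + 1 := by omega
        rw [dif_neg (by omega), dif_pos (by omega)]
        have hd : decide (s.val = j.val + 1) = true := by simp [h3']
        rw [hd, hform, hw, splitAt_apply, dif_neg (by omega), dif_pos rfl]
        simp only [dif_neg h1, if_neg h3, if_pos h3']
        refine Prod.ext (Fin.ext ?_) ?_
        · simp only [Bool.true_xor, consB_zero]
          rcases ε <;> rfl
        · simp only [Bool.true_xor]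
          funext a; simp
    · rw [dif_neg (by omega), dif_neg (by omega), hform, splitAt_apply]
      have hni : φ ⟨s.val - 1, by omega⟩ ≠ φ j := hne _ _ (by omega)
      simp only [dif_neg h1, if_neg (show ¬ s.val = j.val by omega),
        if_neg (show ¬ s.val = j.val + 1 by omega)]
      by_cases h4 : (φ (⟨s.val - 1, by omega⟩ : Fin n)).val < (φ j).val
      · rw [dif_pos h4]
        refine Prod.ext (Fin.ext ?_) rfl
        simp [shiftIdx, h4]
      · have h4' : ¬ (φ (⟨s.val - 1, by omega⟩ : Fin n)).val = (φ j).val :=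
          fun hc => hni (Fin.ext hc)
        rw [dif_neg h4, dif_neg h4']
        refine Prod.ext (Fin.ext ?_) rfl
        simp [shiftIdx, h4]

lemma forest_good {m n : ℕ} {t : C m ≃ₜ C n} (ht : IsForest t) :
    ∀ (G : C m ≃ₜ C m), Good' G →
      ∃ (t' : C m ≃ₜ C n) (F : C n ≃ₜ C n),
        IsForest t' ∧ Good' F ∧ G.trans t = t'.trans F := by
  induction ht with
  | refl =>
      intro G hG
      exact ⟨Homeomorph.refl _, G, IsForest.refl m, hG, rfl⟩
  | @step n' f i hf ih =>
      intro G hG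
      obtain ⟨f', F, hf', hF, heq⟩ := ih G hG
      obtain ⟨j, F', hF', heq2⟩ := good'_step hF i
      refine ⟨f'.trans (splitAt j), F', IsForest.step j hf', hF', ?_⟩
      apply Homeomorph.toEquiv_injective; apply Equiv.ext; intro p
      show splitAt i (f (G p)) = F' (splitAt j (f' p))
      have e1 : splitAt i (f (G p)) = splitAt i (F (f' p)) := by
        rw [← Homeomorph.trans_apply G f, heq, Homeomorph.trans_apply]
      rw [e1, ← Homeomorph.trans_apply F (splitAt i), heq2, Homeomorph.trans_apply]
theorem grig_tree_expansion (n : ℕ) (t : C 1 ≃ₜ C n) (ht : IsForest t)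
    (g : C 1 ≃ₜ C 1) (hg : g ∈ Grig) :
    ∃ (t' : C 1 ≃ₜ C n) (gs : Fin n → (C 1 ≃ₜ C 1)) (α : Equiv.Perm (Fin n)),
      IsForest t' ∧ (∀ i, gs i ∈ Grig) ∧
      g.trans t = (t'.trans (dsumFam gs)).trans (permC α) := by
  have hG : Good' g := by
    refine ⟨fun _ => g, id, fun _ => hg, ?_⟩
    intro s w
    have h0 : s = (0 : Fin 1) := Fin.eq_zero s
    rw [h0]
    exact Prod.ext (Fin.eq_zero _) rfl
  obtain ⟨t', F, ht', hF, heq⟩ := forest_good ht g hG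
  obtain ⟨gs, α, hgs, hFeq⟩ := good'_perm hF
  refine ⟨t', gs, α, ht', hgs, ?_⟩
  rw [heq, hFeq]
  apply Homeomorph.toEquiv_injective; apply Equiv.ext; intro p
  rfl
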